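/- General representer theorem (finite-dimensional): let ℓ : ℝ × ℝ → ℝ be arbitrary in its first argument and g : ℝ≥0 → ℝ strictly monotone increasing. Any minimizer ŵ ∈ ℝⁿ of w ↦ Σₜ ℓ(yₜ, ⟪w, xₜ⟫) + g(‖w‖) lies in span{x₁, …, x_T}. -/

import Mathlib

open scoped RealInnerProductSpace

/-- General (finite-dimensional) representer theorem: for an arbitrary loss
`ℓ : ℝ × ℝ → ℝ` and a strictly monotone increasing regularizer `g` of the norm,
any minimizer of `w ↦ Σₜ ℓ(yₜ, ⟪w, xₜ⟫) + g(‖w‖)` lies in `span{x₁, …, x_T}`. -/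
theorem general_representer (n T : ℕ) (x : Fin T → EuclideanSpace ℝ (Fin n))
    (y : Fin T → ℝ) (ℓ : ℝ → ℝ → ℝ) (g : ℝ → ℝ)
    (hg : ∀ a b : ℝ, 0 ≤ a → a < b → g a < g b)
    (what : EuclideanSpace ℝ (Fin n))
    (hmin : ∀ w : EuclideanSpace ℝ (Fin n),
      (∑ t, ℓ (y t) ⟪what, x t⟫) + g ‖what‖ ≤ (∑ t, ℓ (y t) ⟪w, x t⟫) + g ‖w‖) :
    what ∈ Submodule.span ℝ (Set.range x) := by
  set S := Submodule.span ℝ (Set.range x) with hS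
  by_contra hmem
  set p : EuclideanSpace ℝ (Fin n) := (S.orthogonalProjectionOnto what : EuclideanSpace ℝ (Fin n)) with hp
  have hq : what - p ∈ Sᗮ := Submodule.sub_starProjection_mem_orthogonal (K := S) what
  -- equal inner products
  have hinner : ∀ t, ⟪p, x t⟫ = ⟪what, x t⟫ := by
    intro t
    have hxS : x t ∈ S := Submodule.subset_span ⟨t, rfl⟩
    have := hq (x t) hxS
    have h0 : ⟪what - p, x t⟫ = 0 := by rw [real_inner_comm]; exact this
    rw [inner_sub_left] at h0
    linarith
  have hne : what ≠ p := by
    intro h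
    exact hmem (h ▸ (S.orthogonalProjectionOnto what).2)
  have hnorm : ‖p‖ < ‖what‖ := by
    have hsq : ‖what‖ ^ 2 = ‖p‖ ^ 2 + ‖what - p‖ ^ 2 := by
      have horth : ⟪p, what - p⟫ = 0 := by
        have := hq p (S.orthogonalProjectionOnto what).2
        simpa [real_inner_comm] using this
      have := norm_add_sq_real p (what - p)
      simpa [horth, add_sub_cancel] using this
    have hpos : 0 < ‖what - p‖ ^ 2 :=
      pow_pos (norm_pos_iff.mpr (sub_ne_zero.mpr hne)) 2
    have : ‖p‖ ^ 2 < ‖what‖ ^ 2 := by linarith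
    exact lt_of_pow_lt_pow_left₀ 2 (norm_nonneg _) this
  have hgp : g ‖p‖ < g ‖what‖ := hg _ _ (norm_nonneg _) hnorm
  have := hmin p
  simp only [hinner] at this
  linarith
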